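/- For every real number x with 0 < x < 1 and every real k > 2, one has (1-x)^k < 1 - k·x + (k(k-1)/2)·x². -/

import Mathlib

theorem gerber_upper (x k : ℝ) (hx0 : 0 < x) (hx1 : x < 1) (hk : 2 < k) :
    (1 - x) ^ k < 1 - k * x + (k * (k - 1) / 2) * x ^ 2 := by
  set f : ℝ → ℝ := fun y => 1 - k * y + (k * (k - 1) / 2) * y ^ 2 - (1 - y) ^ k with hf
  have key : ∀ y ∈ Set.Ioo (-1 : ℝ) 1,
      HasDerivAt f (-k + k * (k - 1) * y + k * (1 - y) ^ (k - 1)) y := by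
    intro y hy
    have h1y : 0 < 1 - y := by linarith [hy.2]
    have h0 : HasDerivAt (fun y : ℝ => 1 - y) (-1) y := by
      simpa using (hasDerivAt_id y).const_sub 1
    have h1 : HasDerivAt (fun y : ℝ => (1 - y) ^ k) (k * (1 - y) ^ (k - 1) * (-1)) y :=
      (Real.hasDerivAt_rpow_const (Or.inl h1y.ne')).comp y h0
    have h2 : HasDerivAt (fun y : ℝ => 1 - k * y + (k * (k - 1) / 2) * y ^ 2)
        (-k + (k * (k - 1) / 2) * (2 * y ^ 1)) y := by
      have ha : HasDerivAt (fun y : ℝ => 1 - k * y) (-k) y := by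
        simpa using ((hasDerivAt_id y).const_mul k).const_sub 1
      have hb := (hasDerivAt_pow 2 y).const_mul (k * (k - 1) / 2)
      simpa using ha.fun_add hb
    have := h2.fun_sub h1
    exact this.congr_deriv (by ring)
  have hpos : ∀ y ∈ Set.Ioo (0 : ℝ) 1,
      0 < -k + k * (k - 1) * y + k * (1 - y) ^ (k - 1) := by
    intro y hy
    have hb : (1 : ℝ) + (k - 1) * (-y) < (1 + (-y)) ^ (k - 1) :=
      one_add_mul_self_lt_rpow_one_add (by linarith [hy.2]) (by linarith [hy.1]) (by linarith)
    have h1y : (1 : ℝ) + (-y) = 1 - y := by ring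
    rw [h1y] at hb
    nlinarith [hb, hk]
  have hmono : StrictMonoOn f (Set.Icc 0 x) := by
    apply strictMonoOn_of_deriv_pos (convex_Icc 0 x)
    · intro y hy
      exact (key y ⟨by linarith [hy.1], by linarith [hy.2]⟩).differentiableAt.continuousAt.continuousWithinAt
    · intro y hy
      rw [interior_Icc] at hy
      have hy' : y ∈ Set.Ioo (-1 : ℝ) 1 := ⟨by linarith [hy.1], by linarith [hy.2]⟩
      rw [(key y hy').deriv]
      exact hpos y ⟨hy.1, lt_trans hy.2 hx1⟩
  have hlt := hmono (Set.left_mem_Icc.2 hx0.le) (Set.right_mem_Icc.2 hx0.le) hx0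
  have hf0 : f 0 = 0 := by simp [hf, Real.one_rpow]
  rw [hf0] at hlt
  simp only [hf] at hlt
  linarith
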